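/- Consider the linear program LP_JMS(q, T) over variables α ∈ ℝ^q, d ∈ ℝ^q, r ∈ ℝ^{q×q} (entries r_{j,i} for j ≤ i), λ ∈ ℝ, all nonnegative, with constraints: ∑_i d_i = 1; α_i ≤ α_{i+1} for i < q; r_{j,i+1} ≤ r_{j,i} for j ≤ i < q; α_i ≤ r_{j,i} + d_i + d_j for j < i; r_{j,j} ≤ α_j; ∑_{j<i} max(r_{j,i} − d_j, 0) + ∑_{j≥i} max(α_i − d_j, 0) ≤ λ for each i; λ ≤ T; objective: maximize ∑_i α_i − λ. Then for any positive integers q and c, the optimal value satisfies opt(q, T) ≤ opt(cq, T). Specifically: any feasible solution of LP_JMS(q,T) can be lifted to a feasible solution of LP_JMS(cq,T) with the same objective value via α'_i = α_{⌈i/c⌉}/c, d'_i = d_{⌈i/c⌉}/c, r'_{j,i} = r_{⌈j/c⌉,⌈i/c⌉}/c if ⌈j/c⌉ < ⌈i/c⌉ and α_{⌈j/c⌉}/c if ⌈j/c⌉ = ⌈i/c⌉, λ' = λ. -/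

import Mathlib

/-- Feasibility for the factor-revealing LP `LP_JMS(q, T)`, with variables
indexed by `1, …, q`.  `a` plays the role of `α`, `lam` of `λ`. -/
def jmsFeasible (q : ℕ) (T : ℝ) (a d : ℕ → ℝ) (r : ℕ → ℕ → ℝ) (lam : ℝ) : Prop :=
  (∀ i, 0 ≤ a i) ∧ (∀ i, 0 ≤ d i) ∧ (∀ j i, 0 ≤ r j i) ∧ 0 ≤ lam ∧
  (∑ i ∈ Finset.Icc 1 q, d i) = 1 ∧
  (∀ i, 1 ≤ i → i < q → a i ≤ a (i + 1)) ∧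
  (∀ j i, 1 ≤ j → j ≤ i → i < q → r j (i + 1) ≤ r j i) ∧
  (∀ j i, 1 ≤ j → j < i → i ≤ q → a i ≤ r j i + d i + d j) ∧
  (∀ j, 1 ≤ j → j ≤ q → r j j ≤ a j) ∧
  (∀ i, 1 ≤ i → i ≤ q →
    (∑ j ∈ Finset.Ico 1 i, max (r j i - d j) 0) +
      (∑ j ∈ Finset.Icc i q, max (a i - d j) 0) ≤ lam) ∧
  lam ≤ T

section Aux

variable {c : ℕ}

lemma aux_phi_pos (hc : 1 ≤ c) {i : ℕ} (hi : 1 ≤ i) : 1 ≤ (i + c - 1) / c :=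
  (Nat.one_le_div_iff (by omega)).2 (by omega)

lemma aux_phi_le (hc : 1 ≤ c) {q i : ℕ} (hi : i ≤ c * q) : (i + c - 1) / c ≤ q := by
  have h0 : (q + 1) * c = c * q + c := by ring
  have h : i + c - 1 < (q + 1) * c := by omega
  have := (Nat.div_lt_iff_lt_mul (by omega : 0 < c)).2 h
  omega

lemma aux_phi_mono (hc : 1 ≤ c) {i j : ℕ} (h : i ≤ j) :
    (i + c - 1) / c ≤ (j + c - 1) / c :=
  Nat.div_le_div_right (by omega)

lemma aux_phi_succ (hc : 1 ≤ c) {i : ℕ} (hi : 1 ≤ i) :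
    (i + 1 + c - 1) / c ≤ (i + c - 1) / c + 1 := by
  have h1 : i + 1 + c - 1 = i + c := by omega
  rw [h1, Nat.add_div_right _ (by omega)]
  have h2 : i / c ≤ (i + c - 1) / c := Nat.div_le_div_right (by omega)
  omega

lemma aux_chain_a {q : ℕ} {a : ℕ → ℝ} (ha : ∀ i, 1 ≤ i → i < q → a i ≤ a (i + 1))
    {m n : ℕ} (hm : 1 ≤ m) (hmn : m ≤ n) (hn : n ≤ q) : a m ≤ a n := by
  induction n with
  | zero => omega
  | succ k ih =>
    rcases Nat.eq_or_lt_of_le hmn with h | h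
    · rw [h]
    · exact le_trans (ih (by omega) (by omega)) (ha k (by omega) (by omega))

lemma aux_chain_r {q : ℕ} {r : ℕ → ℕ → ℝ}
    (hr : ∀ j i, 1 ≤ j → j ≤ i → i < q → r j (i + 1) ≤ r j i)
    {j m n : ℕ} (hj : 1 ≤ j) (hjm : j ≤ m) (hmn : m ≤ n) (hn : n ≤ q) :
    r j n ≤ r j m := by
  induction n with
  | zero => omega
  | succ k ih =>
    rcases Nat.eq_or_lt_of_le hmn with h | h
    · rw [h]
    · exact le_trans (hr j k hj (by omega) (by omega)) (ih (by omega) (by omega))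

lemma aux_block_sum (hc : 1 ≤ c) (f : ℕ → ℝ) (q : ℕ) :
    ∑ i ∈ Finset.Icc 1 (c * q), f ((i + c - 1) / c)
      = c * ∑ k ∈ Finset.Icc 1 q, f k := by
  induction q with
  | zero => simp
  | succ n ih =>
    have hIcc : ∀ m : ℕ, Finset.Icc 1 m = Finset.Ioc 0 m := by
      intro m; ext x; simp [Finset.mem_Icc, Finset.mem_Ioc]; omega
    have hmul : c * (n + 1) = c * n + c := by ring
    have hsplit : ∑ i ∈ Finset.Ioc 0 (c * n), f ((i + c - 1) / c)
        + ∑ i ∈ Finset.Ioc (c * n) (c * (n + 1)), f ((i + c - 1) / c)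
        = ∑ i ∈ Finset.Ioc 0 (c * (n + 1)), f ((i + c - 1) / c) :=
      Finset.sum_Ioc_consecutive _ (Nat.zero_le _) (by omega)
    have hblock : ∑ i ∈ Finset.Ioc (c * n) (c * (n + 1)), f ((i + c - 1) / c)
        = c * f (n + 1) := by
      have heq : ∀ i ∈ Finset.Ioc (c * n) (c * (n + 1)), f ((i + c - 1) / c) = f (n + 1) := by
        intro i hi
        simp only [Finset.mem_Ioc] at hi
        congr 1
        apply Nat.div_eq_of_lt_le
        · have : (n + 1) * c = c * n + c := by ring
          omega
        · have h1 : (n + 1 + 1) * c = c * n + c + c := by ring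
          omega
      rw [Finset.sum_congr rfl heq, Finset.sum_const, Nat.card_Ioc]
      have hcard : c * (n + 1) - c * n = c := by omega
      rw [hcard, nsmul_eq_mul]
    rw [hIcc, ← hsplit, ← hIcc, ih, hblock, Finset.sum_Icc_succ_top (by omega)]
    ring

lemma aux_split (f : ℕ → ℝ) {i m : ℕ} (hi : 1 ≤ i) (him : i ≤ m + 1) :
    ∑ j ∈ Finset.Ico 1 i, f j + ∑ j ∈ Finset.Icc i m, f j
      = ∑ j ∈ Finset.Icc 1 m, f j := by
  have h1 : Finset.Ico 1 i = Finset.Ioc 0 (i - 1) := by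
    ext x; simp [Finset.mem_Ico, Finset.mem_Ioc]; omega
  have h2 : Finset.Icc i m = Finset.Ioc (i - 1) m := by
    ext x; simp [Finset.mem_Icc, Finset.mem_Ioc]; omega
  have h3 : Finset.Icc 1 m = Finset.Ioc 0 m := by
    ext x; simp [Finset.mem_Icc, Finset.mem_Ioc]; omega
  rw [h1, h2, h3]
  exact Finset.sum_Ioc_consecutive f (by omega) (by omega)

end Aux

/-- Any feasible solution of `LP_JMS(q,T)` lifts to a feasible solution of
`LP_JMS(cq,T)` with the same objective value, via
`α'_i = α_{⌈i/c⌉}/c`, `d'_i = d_{⌈i/c⌉}/c`,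
`r'_{j,i} = r_{⌈j/c⌉,⌈i/c⌉}/c` if `⌈j/c⌉ < ⌈i/c⌉` and `α_{⌈j/c⌉}/c` otherwise,
`λ' = λ`.  (Here `⌈i/c⌉ = (i + c - 1) / c` in natural-number arithmetic.)
In particular `opt_JMS(q,T) ≤ opt_JMS(cq,T)`. -/
theorem stmt_9 (q c : ℕ) (hq : 1 ≤ q) (hc : 1 ≤ c) (T : ℝ) (hT : 0 < T)
    (a d : ℕ → ℝ) (r : ℕ → ℕ → ℝ) (lam : ℝ)
    (hfeas : jmsFeasible q T a d r lam) :
    jmsFeasible (c * q) T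
      (fun i => a ((i + c - 1) / c) / c)
      (fun i => d ((i + c - 1) / c) / c)
      (fun j i =>
        if (j + c - 1) / c < (i + c - 1) / c then
          r ((j + c - 1) / c) ((i + c - 1) / c) / c
        else
          a ((j + c - 1) / c) / c)
      lam ∧
    (∑ i ∈ Finset.Icc 1 (c * q), a ((i + c - 1) / c) / c) - lam
      = (∑ i ∈ Finset.Icc 1 q, a i) - lam := by
  obtain ⟨ha0, hd0, hr0, hl0, hsum, hamono, hrmono, htri, hrd, hlamc, hlT⟩ := hfeas
  have hc0 : (0 : ℝ) < (c : ℝ) := by exact_mod_cast Nat.lt_of_lt_of_le Nat.zero_lt_one hc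
  have hcS : ∀ S : ℝ, (c : ℝ) * (S / c) = S := fun S => by field_simp
  have hmaxdiv : ∀ x : ℝ, max (x / c) 0 = max x 0 / c := fun x => by
    rw [← max_div_div_right (le_of_lt hc0) x 0, zero_div]
  simp only [jmsFeasible]
  refine ⟨⟨?_, ?_, ?_, hl0, ?_, ?_, ?_, ?_, ?_, ?_, hlT⟩, ?_⟩
  · exact fun i => div_nonneg (ha0 _) hc0.le
  · exact fun i => div_nonneg (hd0 _) hc0.le
  · intro j i
    by_cases h : (j + c - 1) / c < (i + c - 1) / c
    · rw [if_pos h]; exact div_nonneg (hr0 _ _) hc0.le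
    · rw [if_neg h]; exact div_nonneg (ha0 _) hc0.le
  · -- normalization
    have hbs : ∑ i ∈ Finset.Icc 1 (c * q), d ((i + c - 1) / c) / c
        = c * ∑ k ∈ Finset.Icc 1 q, d k / c := aux_block_sum hc (fun k => d k / c) q
    rw [hbs, ← Finset.sum_div, hsum]
    field_simp
  · -- monotonicity of a'
    intro i h1 hlt
    gcongr
    exact aux_chain_a hamono (aux_phi_pos hc h1) (aux_phi_mono hc (by omega))
      (aux_phi_le hc (by omega))
  · -- monotonicity of r' in i
    intro j i hj hji hi
    have hkj1 : 1 ≤ (j + c - 1) / c := aux_phi_pos hc hj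
    have hmji : (j + c - 1) / c ≤ (i + c - 1) / c := aux_phi_mono hc hji
    have hmi : (i + c - 1) / c ≤ (i + 1 + c - 1) / c := aux_phi_mono hc (by omega)
    have hsucc : (i + 1 + c - 1) / c ≤ (i + c - 1) / c + 1 := aux_phi_succ hc (by omega)
    have hq' : (i + 1 + c - 1) / c ≤ q := aux_phi_le hc (by omega)
    by_cases h1 : (j + c - 1) / c < (i + c - 1) / c
    · rw [if_pos h1, if_pos (lt_of_lt_of_le h1 hmi)]
      gcongr
      exact aux_chain_r hrmono hkj1 (le_of_lt h1) hmi hq'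
    · rw [if_neg h1]
      have hkeq : (j + c - 1) / c = (i + c - 1) / c := le_antisymm hmji (not_lt.1 h1)
      by_cases h2 : (j + c - 1) / c < (i + 1 + c - 1) / c
      · rw [if_pos h2]
        have h3 : (i + 1 + c - 1) / c = (j + c - 1) / c + 1 := by omega
        rw [h3]
        gcongr
        exact le_trans (hrmono _ _ hkj1 le_rfl (by omega)) (hrd _ hkj1 (by omega))
      · rw [if_neg h2]
  · -- triangle
    intro j i hj hji hi
    have hkj1 : 1 ≤ (j + c - 1) / c := aux_phi_pos hc hj
    have hmji : (j + c - 1) / c ≤ (i + c - 1) / c := aux_phi_mono hc (le_of_lt hji)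
    have hkiq : (i + c - 1) / c ≤ q := aux_phi_le hc hi
    by_cases h1 : (j + c - 1) / c < (i + c - 1) / c
    · rw [if_pos h1, ← add_div, ← add_div]
      gcongr
      exact htri _ _ hkj1 h1 hkiq
    · rw [if_neg h1]
      have hkeq : (j + c - 1) / c = (i + c - 1) / c := le_antisymm hmji (not_lt.1 h1)
      rw [hkeq]
      have h2 := div_nonneg (hd0 ((i + c - 1) / c)) hc0.le
      have h3 := div_nonneg (hd0 ((j + c - 1) / c)) hc0.le
      linarith
  · -- r'_{j,j} ≤ a'_j
    intro j hj hjq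
    rw [if_neg (lt_irrefl _)]
  · -- λ-constraint
    intro i hi hicq
    have hk1 : 1 ≤ (i + c - 1) / c := aux_phi_pos hc hi
    have hkq : (i + c - 1) / c ≤ q := aux_phi_le hc hicq
    have hLHS : (∑ j ∈ Finset.Ico 1 i,
          max ((if (j + c - 1) / c < (i + c - 1) / c then
                r ((j + c - 1) / c) ((i + c - 1) / c) / c
              else a ((j + c - 1) / c) / c) - d ((j + c - 1) / c) / c) 0)
        + ∑ j ∈ Finset.Icc i (c * q),
            max (a ((i + c - 1) / c) / c - d ((j + c - 1) / c) / c) 0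
        = ∑ j ∈ Finset.Icc 1 (c * q),
            (if (j + c - 1) / c < (i + c - 1) / c then
                max (r ((j + c - 1) / c) ((i + c - 1) / c) - d ((j + c - 1) / c)) 0
              else max (a ((i + c - 1) / c) - d ((j + c - 1) / c)) 0) / c := by
      rw [← aux_split _ hi (by omega)]
      congr 1
      · apply Finset.sum_congr rfl
        intro j hj
        simp only [Finset.mem_Ico] at hj
        by_cases h1 : (j + c - 1) / c < (i + c - 1) / c
        · rw [if_pos h1, if_pos h1, div_sub_div_same, hmaxdiv]
        · rw [if_neg h1, if_neg h1]
          have hkeq : (j + c - 1) / c = (i + c - 1) / c :=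
            le_antisymm (aux_phi_mono hc (by omega)) (not_lt.1 h1)
          rw [hkeq, div_sub_div_same, hmaxdiv]
      · apply Finset.sum_congr rfl
        intro j hj
        simp only [Finset.mem_Icc] at hj
        have h1 : ¬ (j + c - 1) / c < (i + c - 1) / c :=
          not_lt.2 (aux_phi_mono hc (by omega))
        rw [if_neg h1, div_sub_div_same, hmaxdiv]
    rw [hLHS]
    have hbs : ∑ j ∈ Finset.Icc 1 (c * q),
            (if (j + c - 1) / c < (i + c - 1) / c then
                max (r ((j + c - 1) / c) ((i + c - 1) / c) - d ((j + c - 1) / c)) 0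
              else max (a ((i + c - 1) / c) - d ((j + c - 1) / c)) 0) / c
        = c * ∑ k' ∈ Finset.Icc 1 q,
            (if k' < (i + c - 1) / c then
                max (r k' ((i + c - 1) / c) - d k') 0
              else max (a ((i + c - 1) / c) - d k') 0) / c :=
      aux_block_sum hc (fun k' =>
        (if k' < (i + c - 1) / c then max (r k' ((i + c - 1) / c) - d k') 0
          else max (a ((i + c - 1) / c) - d k') 0) / c) q
    rw [hbs, ← Finset.sum_div, hcS]
    rw [← aux_split _ hk1 (by omega)]
    have e1 : ∑ j ∈ Finset.Ico 1 ((i + c - 1) / c),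
        (if j < (i + c - 1) / c then max (r j ((i + c - 1) / c) - d j) 0
          else max (a ((i + c - 1) / c) - d j) 0)
        = ∑ j ∈ Finset.Ico 1 ((i + c - 1) / c), max (r j ((i + c - 1) / c) - d j) 0 := by
      apply Finset.sum_congr rfl
      intro j hj
      simp only [Finset.mem_Ico] at hj
      rw [if_pos hj.2]
    have e2 : ∑ j ∈ Finset.Icc ((i + c - 1) / c) q,
        (if j < (i + c - 1) / c then max (r j ((i + c - 1) / c) - d j) 0
          else max (a ((i + c - 1) / c) - d j) 0)
        = ∑ j ∈ Finset.Icc ((i + c - 1) / c) q, max (a ((i + c - 1) / c) - d j) 0 := by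
      apply Finset.sum_congr rfl
      intro j hj
      simp only [Finset.mem_Icc] at hj
      rw [if_neg (not_lt.2 hj.1)]
    rw [e1, e2]
    exact hlamc _ hk1 hkq
  · -- objective
    have hbs : ∑ i ∈ Finset.Icc 1 (c * q), a ((i + c - 1) / c) / c
        = c * ∑ k ∈ Finset.Icc 1 q, a k / c := aux_block_sum hc (fun k => a k / c) q
    rw [hbs, ← Finset.sum_div, hcS]
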